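/- Let R be a discrete valuation ring with uniformizer π and fraction field K, V a finite-dimensional K-vector space with a nondegenerate symmetric bilinear form ⟨-,-⟩, and L ⊆ V a full-rank R-lattice that is maximal among lattices satisfying ⟨L, L⟩ ⊆ R (integral lattices). Then π L* ⊆ L, where L* = {v ∈ V : ⟨L, v⟩ ⊆ R} is the dual lattice. -/

import Mathlib

/-- If `L` is a maximal integral lattice in a `K`-space with nondegenerate
symmetric bilinear form, then `π L* ⊆ L`, where `L*` is the dual lattice and `π`
a uniformizer of the DVR `R`. -/
theorem stmt14 (R : Type*) [CommRing R] [IsDomain R] [IsDiscreteValuationRing R]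
    (π : R) (hπ : Irreducible π)
    (K : Type*) [Field K] [Algebra R K] [IsFractionRing R K]
    (V : Type*) [AddCommGroup V] [Module K V] [FiniteDimensional K V]
    [Module R V] [IsScalarTower R K V]
    (B : LinearMap.BilinForm K V) (hB : B.Nondegenerate)
    (hsymm : ∀ v w : V, B v w = B w v)
    (L : Submodule R V) (hfg : L.FG)
    (hfull : Submodule.span K (L : Set V) = ⊤)
    (hint : ∀ x ∈ L, ∀ y ∈ L, ∃ r : R, algebraMap R K r = B x y)
    (hmax : ∀ L' : Submodule R V, L'.FG → Submodule.span K (L' : Set V) = ⊤ →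
      (∀ x ∈ L', ∀ y ∈ L', ∃ r : R, algebraMap R K r = B x y) → L ≤ L' → L' = L) :
    ∀ v : V, (∀ l ∈ L, ∃ r : R, algebraMap R K r = B l v) → π • v ∈ L := by
  intro v hv
  set a : K := B v v with ha
  -- the set of k with π^(2k) * a integral is nonempty
  have hS : ∃ k : ℕ, ∃ r : R, algebraMap R K r = (algebraMap R K π) ^ (2 * k) * a := by
    obtain ⟨s, r, hr⟩ := IsLocalization.exists_integer_multiple (nonZeroDivisors R) a
    have hs0 : (s : R) ≠ 0 := nonZeroDivisors.coe_ne_zero s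
    obtain ⟨n, u, hu⟩ := IsDiscreteValuationRing.eq_unit_mul_pow_irreducible hs0 hπ
    refine ⟨n, π ^ n * ((u⁻¹ : Rˣ) * r), ?_⟩
    have h1 : algebraMap R K r = algebraMap R K (s : R) * a := by
      rw [hr, Algebra.smul_def]
    have h2 : algebraMap R K ((u : R) * π ^ n) * a = algebraMap R K r := by
      rw [← hu, ← h1]
    have hu' : algebraMap R K ((u⁻¹ : Rˣ) : R) * algebraMap R K (u : R) = 1 := by
      rw [← map_mul, Units.inv_mul, map_one]
    push_cast [map_mul, map_pow] at *
    calc algebraMap R K π ^ n * (algebraMap R K ((u⁻¹ : Rˣ) : R) * algebraMap R K r)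
        = algebraMap R K π ^ n * (algebraMap R K ((u⁻¹ : Rˣ) : R) *
            (algebraMap R K (u : R) * algebraMap R K π ^ n * a)) := by rw [h2]
      _ = (algebraMap R K ((u⁻¹ : Rˣ) : R) * algebraMap R K (u : R)) *
            (algebraMap R K π ^ n * algebraMap R K π ^ n * a) := by ring
      _ = algebraMap R K π ^ (2 * n) * a := by rw [hu', one_mul, two_mul, pow_add]
  classical
  set k := Nat.find hS with hkdef
  obtain ⟨r₃, hr₃⟩ := Nat.find_spec hS
  set w : V := (π ^ k : R) • v with hw
  -- membership in the enlarged lattice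
  set M : Submodule R V := L ⊔ Submodule.span R {w} with hM
  have hmem : ∀ x ∈ M, ∃ l ∈ L, ∃ c : R, x = l + c • w := by
    intro x hx
    obtain ⟨l, hl, z, hz, rfl⟩ := Submodule.mem_sup.mp hx
    obtain ⟨c, rfl⟩ := Submodule.mem_span_singleton.mp hz
    exact ⟨l, hl, c, rfl⟩
  have hBw : ∀ l, B l w = algebraMap R K (π ^ k) * B l v := by
    intro l
    rw [hw, ← algebraMap_smul K (π ^ k : R) v, map_smul, smul_eq_mul]
  have hBww : B w w = algebraMap R K π ^ (2 * k) * a := by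
    rw [hBw, hw, hsymm, hBw, map_pow, two_mul, pow_add, ha]
    ring
  have hMint : ∀ x ∈ M, ∀ y ∈ M, ∃ r : R, algebraMap R K r = B x y := by
    intro x hx y hy
    obtain ⟨l, hl, c, rfl⟩ := hmem x hx
    obtain ⟨l', hl', c', rfl⟩ := hmem y hy
    obtain ⟨r₀, hr₀⟩ := hint l hl l' hl'
    obtain ⟨r₁, hr₁⟩ := hv l hl
    obtain ⟨r₂, hr₂⟩ := hv l' hl'
    refine ⟨r₀ + c' * (π ^ k * r₁) + c * (π ^ k * r₂) + c * (c' * r₃), ?_⟩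
    have hc : ∀ (c : R) (u : V), (c : R) • u = algebraMap R K c • u :=
      fun c u => (algebraMap_smul K c u).symm
    have hr₃' : algebraMap R K r₃ = algebraMap R K π ^ (2 * k) * a := hr₃
    rw [hc c w, hc c' w]
    simp only [map_add, LinearMap.add_apply, map_smul, LinearMap.smul_apply, smul_eq_mul,
      map_mul, map_pow]
    rw [hsymm w l', hBw l, hBw l', hBww, ← hr₀, ← hr₁, ← hr₂, ← hr₃']
    simp only [map_pow]
    ring
  have hMfull : Submodule.span K (M : Set V) = ⊤ := by
    rw [eq_top_iff, ← hfull]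
    exact Submodule.span_mono (fun x hx => (le_sup_left : L ≤ M) hx)
  have hML : M = L :=
    hmax M (hfg.sup (Submodule.fg_span_singleton w)) hMfull hMint le_sup_left
  have hwL : w ∈ L := by
    rw [← hML]
    exact Submodule.mem_sup_right (Submodule.mem_span_singleton_self w)
  -- now show k ≤ 1
  rcases Nat.lt_or_ge k 2 with hk2 | hk2
  · interval_cases k
    · have : v ∈ L := by simpa [hw] using hwL
      exact Submodule.smul_mem L π this
    · simpa [hw] using hwL
  · exfalso
    obtain ⟨r, hr⟩ := hv w hwL
    have hkin : ∃ r : R, algebraMap R K r = (algebraMap R K π) ^ (2 * (k - 1)) * a := by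
      refine ⟨π ^ (k - 2) * r, ?_⟩
      rw [map_mul, map_pow, hr, hsymm w v, hBw v, ha, map_pow, ← mul_assoc, ← pow_add]
      congr 2
      omega
    exact Nat.find_min hS (by omega : k - 1 < k) hkin
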